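/- For every ε > 0 and every rooted graph F, there exists a positive integer m such that for every n ≥ m and every string a = a₁…aₙ ∈ ℕⁿ, there exists k ∈ {1,…,m} with λ₁(F, a₁…a_{k-1} 0 a_k…aₙ) < λ₁(F, a) + ε. -/

import Mathlib

/-- A rooted graph: a finite simple graph with a distinguished root vertex. -/
structure RootedGraph where
  V : Type
  [fintypeV : Fintype V]
  G : SimpleGraph V
  root : V

attribute [instance] RootedGraph.fintypeV

/-- One-step extension of a rooted graph: attach a new path vertex (the new root)
to the old root, together with a clique of `k` new vertices each adjacent to
both the old root and the new path vertex. -/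
def RootedGraph.extend (F : RootedGraph) (k : ℕ) : RootedGraph where
  V := F.V ⊕ Option (Fin k)
  G :=
    { Adj := fun a b =>
        match a, b with
        | Sum.inl u, Sum.inl w => F.G.Adj u w
        | Sum.inl u, Sum.inr _ => u = F.root
        | Sum.inr _, Sum.inl w => w = F.root
        | Sum.inr x, Sum.inr y => x ≠ y
      symm := ⟨by
        rintro (u | x) (w | y) h
        · exact F.G.adj_symm h
        · exact h
        · exact h
        · exact h.symm⟩
      loopless := ⟨by
        rintro (u | x) h
        · exact F.G.irrefl h
        · exact h rfl⟩ }
  root := Sum.inr none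

/-- The rowing graph `(F, a)`. -/
def RootedGraph.rowing (F : RootedGraph) (a : List ℕ) : RootedGraph :=
  a.foldl RootedGraph.extend F

open scoped Classical in
/-- Adjacency matrix of (the graph of) a rooted graph. -/
noncomputable def RootedGraph.adjMat (F : RootedGraph) : Matrix F.V F.V ℝ :=
  Matrix.of fun u v => if F.G.Adj u v then 1 else 0

/-- The smallest adjacency eigenvalue of a rooted graph. -/
noncomputable def RootedGraph.lam1 (F : RootedGraph) : ℝ :=
  sInf {t : ℝ | ∃ x : F.V → ℝ, x ≠ 0 ∧ F.adjMat.mulVec x = t • x}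

namespace RowAux
open Finset Matrix
open scoped Classical

noncomputable def quad (F : RootedGraph) (x : F.V → ℝ) : ℝ :=
  ∑ v, ∑ u, (if F.G.Adj v u then (1:ℝ) else 0) * (x v * x u)

lemma quad_eq_dot (F : RootedGraph) (x : F.V → ℝ) :
    quad F x = x ⬝ᵥ (F.adjMat.mulVec x) := by
  classical
  unfold quad dotProduct Matrix.mulVec RootedGraph.adjMat
  simp only [Matrix.of_apply, dotProduct]
  rw [Finset.sum_congr rfl]
  intro v _
  rw [Finset.mul_sum]
  refine Finset.sum_congr rfl fun u _ => ?_
  ring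

-- extend adjacency simp lemmas
lemma extend_adj_inl_inl (F : RootedGraph) (k : ℕ) (u w : F.V) :
    (F.extend k).G.Adj (Sum.inl u) (Sum.inl w) ↔ F.G.Adj u w := Iff.rfl

lemma extend_adj_inl_inr (F : RootedGraph) (k : ℕ) (u : F.V) (t : Option (Fin k)) :
    (F.extend k).G.Adj (Sum.inl u) (Sum.inr t) ↔ u = F.root := Iff.rfl

lemma extend_adj_inr_inl (F : RootedGraph) (k : ℕ) (t : Option (Fin k)) (u : F.V) :
    (F.extend k).G.Adj (Sum.inr t) (Sum.inl u) ↔ u = F.root := Iff.rfl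

lemma extend_adj_inr_inr (F : RootedGraph) (k : ℕ) (s t : Option (Fin k)) :
    (F.extend k).G.Adj (Sum.inr s) (Sum.inr t) ↔ s ≠ t := Iff.rfl

lemma rowing_cons (F : RootedGraph) (c : ℕ) (a : List ℕ) :
    F.rowing (c :: a) = (F.extend c).rowing a := rfl

def mapRow : (b : List ℕ) → {H H' : RootedGraph} → (H'.V → H.V) →
    ((H'.rowing b).V → (H.rowing b).V)
  | [], _, _, g => g
  | c :: b, H, H', g => mapRow b (H := H.extend c) (H' := H'.extend c) (Sum.map g id)

def inclRow : (b : List ℕ) → (H : RootedGraph) → H.V → (H.rowing b).V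
  | [], _ => id
  | c :: b, H => fun v => inclRow b (H.extend c) (Sum.inl v)

lemma inclRow_injective : ∀ (b : List ℕ) (H : RootedGraph), Function.Injective (inclRow b H) := by
  intro b
  induction b with
  | nil => intro H u v h; exact h
  | cons c b ih =>
    intro H u v h
    have := ih (H.extend c) h
    exact Sum.inl_injective this

/-- the `j`-th path vertex inside the rowing graph -/
def rootAt : (a : List ℕ) → (F : RootedGraph) → (j : ℕ) → (F.rowing a).V
  | a, F, 0 => inclRow a F F.root
  | [], F, _ + 1 => F.root
  | c :: a, F, j + 1 => rootAt a (F.extend c) j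

lemma rootAt_zero (a : List ℕ) (F : RootedGraph) : rootAt a F 0 = inclRow a F F.root := by
  cases a <;> rfl

lemma inclRow_ne_rootAt : ∀ (a : List ℕ) (F : RootedGraph) (u : F.V) (j : ℕ),
    1 ≤ j → j ≤ a.length → inclRow a F u ≠ rootAt a F j := by
  intro a
  induction a with
  | nil => intro F u j h1 h2; simp at h2; omega
  | cons c a ih =>
    intro F u j h1 h2
    match j, h1 with
    | 1, _ =>
      show inclRow a (F.extend c) (Sum.inl u) ≠ rootAt a (F.extend c) 0
      rw [rootAt_zero]
      intro h
      have := inclRow_injective a (F.extend c) h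
      exact Sum.inl_ne_inr this
    | (j + 2), _ =>
      show inclRow a (F.extend c) (Sum.inl u) ≠ rootAt a (F.extend c) (j + 1)
      exact ih (F.extend c) (Sum.inl u) (j + 1) (by omega) (by simpa using h2)

lemma rootAt_injOn : ∀ (a : List ℕ) (F : RootedGraph) (i j : ℕ),
    i ≤ a.length → j ≤ a.length → rootAt a F i = rootAt a F j → i = j := by
  intro a
  induction a with
  | nil => intro F i j hi hj _; simp at hi hj; omega
  | cons c a ih =>
    intro F i j hi hj h
    match i, j with
    | 0, 0 => rfl
    | 0, j + 1 =>
      exact absurd h (inclRow_ne_rootAt (c :: a) F F.root (j + 1) (by omega) hj)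
    | i + 1, 0 =>
      exact absurd h.symm (inclRow_ne_rootAt (c :: a) F F.root (i + 1) (by omega) hi)
    | i + 1, j + 1 =>
      have := ih (F.extend c) i j (by simpa using hi) (by simpa using hj) h
      omega

noncomputable def cliqueQ (c : ℕ) (w : Option (Fin c) → ℝ) : ℝ :=
  ∑ s, ∑ t, (if s ≠ t then (1:ℝ) else 0) * (w s * w t)

lemma sum_boole_mul {α : Type*} [Fintype α] (a : α) (f : α → ℝ) :
    ∑ u, (if u = a then (1:ℝ) else 0) * f u = f a := by
  rw [Finset.sum_eq_single a]
  · simp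
  · intro b _ hb; simp [hb]
  · intro h; exact absurd (Finset.mem_univ a) h

lemma quad_extend (K : RootedGraph) (c : ℕ) (y : (K.extend c).V → ℝ) :
    quad (K.extend c) y = quad K (fun v => y (Sum.inl v))
      + 2 * (y (Sum.inl K.root) * ∑ t : Option (Fin c), y (Sum.inr t))
      + cliqueQ c (fun t => y (Sum.inr t)) := by
  unfold quad cliqueQ
  show (∑ v : K.V ⊕ Option (Fin c), ∑ u : K.V ⊕ Option (Fin c),
      (if (K.extend c).G.Adj v u then (1:ℝ) else 0) * (y v * y u)) = _
  rw [Fintype.sum_sum_type]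
  simp only [Fintype.sum_sum_type, extend_adj_inl_inl, extend_adj_inl_inr, extend_adj_inr_inl,
    extend_adj_inr_inr, Finset.sum_add_distrib]
  have h2 : ∑ x : K.V, ∑ t : Option (Fin c),
      (if x = K.root then (1:ℝ) else 0) * (y (Sum.inl x) * y (Sum.inr t))
      = y (Sum.inl K.root) * ∑ t : Option (Fin c), y (Sum.inr t) := by
    rw [← sum_boole_mul K.root (fun x => y (Sum.inl x) * ∑ t : Option (Fin c), y (Sum.inr t))]
    refine Finset.sum_congr rfl fun x _ => ?_
    rw [Finset.mul_sum, Finset.mul_sum]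
  have h3 : ∑ x : Option (Fin c), ∑ u : K.V,
      (if u = K.root then (1:ℝ) else 0) * (y (Sum.inr x) * y (Sum.inl u))
      = y (Sum.inl K.root) * ∑ t : Option (Fin c), y (Sum.inr t) := by
    have : ∀ x : Option (Fin c), ∑ u : K.V,
        (if u = K.root then (1:ℝ) else 0) * (y (Sum.inr x) * y (Sum.inl u))
        = y (Sum.inr x) * y (Sum.inl K.root) :=
      fun x => sum_boole_mul K.root (fun u => y (Sum.inr x) * y (Sum.inl u))
    rw [Finset.sum_congr rfl fun x _ => this x, ← Finset.sum_mul]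
    ring
  rw [h2, h3]
  ring

lemma cliqueQ_eq (c : ℕ) (w : Option (Fin c) → ℝ) :
    cliqueQ c w = (∑ t, w t) ^ 2 - ∑ t, (w t) ^ 2 := by
  unfold cliqueQ
  have h : ∀ s t : Option (Fin c), (if s ≠ t then (1:ℝ) else 0) * (w s * w t)
      = w s * w t - (if t = s then (1:ℝ) else 0) * (w s * w t) := by
    intro s t
    by_cases h : s = t <;> simp [h, eq_comm]
  simp only [h]
  rw [Finset.sum_congr rfl (fun s _ => Finset.sum_sub_distrib _ _), Finset.sum_sub_distrib]
  congr 1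
  · rw [sq, Finset.sum_mul_sum]
  · refine Finset.sum_congr rfl fun s _ => ?_
    rw [Finset.sum_eq_single s]
    · rw [if_pos rfl]; ring
    · intro b _ hb; rw [if_neg hb, zero_mul]
    · intro h; exact absurd (Finset.mem_univ s) h

lemma inclRow_cons (c : ℕ) (b : List ℕ) (H : RootedGraph) (v : H.V) :
    inclRow (c :: b) H v = inclRow b (H.extend c) (Sum.inl v) := rfl

lemma mapRow_cons (c : ℕ) (b : List ℕ) (H H' : RootedGraph) (g : H'.V → H.V)
    (v : ((H'.extend c).rowing b).V) :
    mapRow (c :: b) (H := H) (H' := H') g v = mapRow b (Sum.map g id) v := rfl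

lemma sum_mapRow : ∀ (b : List ℕ) (H H' : RootedGraph) (g : H'.V → H.V)
    (f : (H.rowing b).V → ℝ),
    ∑ v, f (mapRow b g v)
      = ∑ v, f v + ((∑ v' : H'.V, f (inclRow b H (g v'))) - ∑ u : H.V, f (inclRow b H u)) := by
  intro b
  induction b with
  | nil =>
    intro H H' g f
    show ∑ v, f (g v) = (∑ v : H.V, f v) + ((∑ v' : H'.V, f (g v')) - ∑ u : H.V, f u)
    ring
  | cons c b ih =>
    intro H H' g f
    calc ∑ v, f (mapRow (c :: b) (H := H) (H' := H') g v)
        = ∑ v : ((H'.extend c).rowing b).V, f (mapRow b (Sum.map g id) v) := rfl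
      _ = ∑ v, f v + ((∑ v' : (H'.extend c).V, f (inclRow b (H.extend c) (Sum.map g id v')))
            - ∑ u : (H.extend c).V, f (inclRow b (H.extend c) u)) := ih (H.extend c) (H'.extend c) _ f
      _ = ∑ v, f v + ((∑ v' : H'.V, f (inclRow (c :: b) H (g v')))
            - ∑ u : H.V, f (inclRow (c :: b) H u)) := by
          have e1 : (∑ v' : (H'.extend c).V, f (inclRow b (H.extend c) (Sum.map g id v')))
              = (∑ v' : H'.V, f (inclRow b (H.extend c) (Sum.inl (g v'))))
                + ∑ t : Option (Fin c), f (inclRow b (H.extend c) (Sum.inr t)) := by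
            show (∑ v' : H'.V ⊕ Option (Fin c), f (inclRow b (H.extend c) (Sum.map g id v'))) = _
            rw [Fintype.sum_sum_type]
            rfl
          have e2 : (∑ u : (H.extend c).V, f (inclRow b (H.extend c) u))
              = (∑ u : H.V, f (inclRow b (H.extend c) (Sum.inl u)))
                + ∑ t : Option (Fin c), f (inclRow b (H.extend c) (Sum.inr t)) := by
            show (∑ u : H.V ⊕ Option (Fin c), f (inclRow b (H.extend c) u)) = _
            rw [Fintype.sum_sum_type]
          rw [e1, e2]
          simp only [inclRow_cons]
          ring

lemma quad_mapRow : ∀ (b : List ℕ) (H H' : RootedGraph) (g : H'.V → H.V) (z : H.V),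
    g H'.root = H.root →
    (∀ x : H.V → ℝ, quad H' (fun v => x (g v)) = quad H x + 2 * x z ^ 2) →
    ∀ x : (H.rowing b).V → ℝ,
      quad (H'.rowing b) (fun v => x (mapRow b g v))
        = quad (H.rowing b) x + 2 * x (inclRow b H z) ^ 2 := by
  intro b
  induction b with
  | nil => intro H H' g z _ hQ x; exact hQ x
  | cons c b ih =>
    intro H H' g z hroot hQ x
    refine ih (H.extend c) (H'.extend c) (Sum.map g id) (Sum.inl z) rfl ?_ x
    intro x
    have e := quad_extend H' c (fun v => x (Sum.map g id v))
    simp only [Sum.map_inl, Sum.map_inr, id_eq] at e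
    rw [e, hQ (fun u => x (Sum.inl u)), quad_extend H c x, hroot]
    ring

lemma hQ0 (H : RootedGraph) (x : H.V → ℝ) :
    quad (H.extend 0) (fun v => x (Sum.elim id (fun _ => H.root) v))
      = quad H x + 2 * x H.root ^ 2 := by
  have e := quad_extend H 0 (fun v => x (Sum.elim id (fun _ => H.root) v))
  simp only [Sum.elim_inl, Sum.elim_inr, id_eq] at e
  rw [e, cliqueQ_eq]
  simp [Fintype.sum_option]
  ring

set_option maxHeartbeats 2000000 in
lemma main_ineq (j : ℕ) : ∀ (a : List ℕ) (F : RootedGraph), j ≤ a.length →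
    ∀ x : (F.rowing a).V → ℝ,
    ∃ y : (F.rowing (a.take j ++ 0 :: a.drop j)).V → ℝ,
      (∑ v, (y v)^2 = ∑ v, (x v)^2 + x (rootAt a F j)^2) ∧
      quad (F.rowing (a.take j ++ 0 :: a.drop j)) y
        = quad (F.rowing a) x + 2 * x (rootAt a F j)^2 := by
  induction j with
  | zero =>
    intro a F _ x
    show ∃ y : ((F.extend 0).rowing a).V → ℝ,
      (∑ v, (y v)^2 = ∑ v, (x v)^2 + x (rootAt a F 0)^2) ∧
      quad ((F.extend 0).rowing a) y = quad (F.rowing a) x + 2 * x (rootAt a F 0)^2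
    refine ⟨fun v => x (mapRow a (H := F) (H' := F.extend 0)
      (Sum.elim id (fun _ => F.root)) v), ?_, ?_⟩
    · have e := sum_mapRow a F (F.extend 0) (Sum.elim id (fun _ => F.root))
        (fun v => x v ^ 2)
      have e2 : (∑ v' : (F.extend 0).V,
          (x (inclRow a F (Sum.elim id (fun _ => F.root) v')))^2)
          = (∑ u : F.V, (x (inclRow a F u))^2) + (x (inclRow a F F.root))^2 := by
        show (∑ v' : F.V ⊕ Option (Fin 0),
          (x (inclRow a F (Sum.elim id (fun _ => F.root) v')))^2) = _
        rw [Fintype.sum_sum_type]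
        simp [Fintype.sum_option]
      rw [rootAt_zero]
      rw [e2] at e
      refine Eq.trans (by exact e) (by ring)
    · rw [rootAt_zero]
      exact quad_mapRow a F (F.extend 0) (Sum.elim id (fun _ => F.root)) F.root rfl
        (hQ0 F) x
  | succ j ih =>
    intro a F h x
    match a with
    | [] => simp at h
    | c :: a' => exact ih a' (F.extend c) (by simpa using h) x

lemma quad_ge_base (F : RootedGraph) (y : F.V → ℝ) :
    -(Fintype.card F.V : ℝ) * ∑ v, y v ^ 2 ≤ quad F y := by
  have h1 : ∀ v u : F.V, -(|y v| * |y u|)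
      ≤ (if F.G.Adj v u then (1:ℝ) else 0) * (y v * y u) := by
    intro v u
    by_cases h : F.G.Adj v u
    · rw [if_pos h, one_mul, ← abs_mul]
      exact neg_abs_le _
    · rw [if_neg h, zero_mul]
      have := abs_nonneg (y v)
      have := abs_nonneg (y u)
      nlinarith
  have h2 : ∑ v : F.V, ∑ u : F.V, -(|y v| * |y u|) ≤ quad F y := by
    unfold quad
    refine Finset.sum_le_sum fun v _ => Finset.sum_le_sum fun u _ => h1 v u
  have h3 : ∑ v : F.V, ∑ u : F.V, -(|y v| * |y u|)
      = -((∑ v : F.V, |y v|) * (∑ v : F.V, |y v|)) := by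
    rw [Finset.sum_mul_sum]
    rw [← Finset.sum_neg_distrib]
    refine Finset.sum_congr rfl fun v _ => ?_
    rw [← Finset.sum_neg_distrib]
  have h4 : (∑ v : F.V, |y v|) ^ 2 ≤ (Fintype.card F.V : ℝ) * ∑ v, y v ^ 2 := by
    have := Finset.sum_mul_sq_le_sq_mul_sq Finset.univ (fun _ => (1:ℝ)) (fun v => |y v|)
    simp only [one_mul, one_pow, Finset.sum_const, Finset.card_univ, nsmul_eq_mul, mul_one,
      sq_abs] at this
    exact this
  nlinarith [h2, h3, h4]

lemma quad_rowing_ge : ∀ (a : List ℕ) (H : RootedGraph) (x : (H.rowing a).V → ℝ),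
    quad H (fun u => x (inclRow a H u))
      - 2 * ((∑ v, x v ^ 2) - ∑ u : H.V, x (inclRow a H u) ^ 2)
      - x (inclRow a H H.root) ^ 2 ≤ quad (H.rowing a) x := by
  intro a
  induction a with
  | nil =>
    intro H x
    show quad H x - 2 * ((∑ v : H.V, x v ^ 2) - ∑ u : H.V, x u ^ 2) - x H.root ^ 2
      ≤ quad H x
    have := sq_nonneg (x H.root)
    linarith
  | cons c a ih =>
    intro H x
    have IH := ih (H.extend c) x
    have eQ := quad_extend H c (fun u => x (inclRow a (H.extend c) u))
    have eC := cliqueQ_eq c (fun t => x (inclRow a (H.extend c) (Sum.inr t)))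
    have esum : (∑ u : (H.extend c).V, x (inclRow a (H.extend c) u) ^ 2)
        = (∑ u : H.V, x (inclRow a (H.extend c) (Sum.inl u)) ^ 2)
          + ∑ t : Option (Fin c), x (inclRow a (H.extend c) (Sum.inr t)) ^ 2 := by
      show (∑ u : H.V ⊕ Option (Fin c), x (inclRow a (H.extend c) u) ^ 2) = _
      rw [Fintype.sum_sum_type]
    have hw : x (inclRow a (H.extend c) ((H.extend c).root)) ^ 2
        ≤ ∑ t : Option (Fin c), x (inclRow a (H.extend c) (Sum.inr t)) ^ 2 := by
      exact Finset.single_le_sum (f := fun t : Option (Fin c) =>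
        x (inclRow a (H.extend c) (Sum.inr t)) ^ 2)
        (fun t _ => sq_nonneg _) (Finset.mem_univ none)
    beta_reduce at IH eQ eC
    show quad H (fun u => x (inclRow a (H.extend c) (Sum.inl u)))
      - 2 * ((∑ v : ((H.extend c).rowing a).V, x v ^ 2)
          - ∑ u : H.V, x (inclRow a (H.extend c) (Sum.inl u)) ^ 2)
      - x (inclRow a (H.extend c) (Sum.inl H.root)) ^ 2 ≤ quad ((H.extend c).rowing a) x
    nlinarith [sq_nonneg (x (inclRow a (H.extend c) (Sum.inl H.root))
      + ∑ t : Option (Fin c), x (inclRow a (H.extend c) (Sum.inr t)))]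

lemma adjMat_isHermitian (F : RootedGraph) : F.adjMat.IsHermitian := by
  ext i j
  simp only [RootedGraph.adjMat, Matrix.conjTranspose_apply, Matrix.of_apply]
  by_cases h : F.G.Adj j i
  · rw [if_pos h, if_pos (F.G.adj_symm h)]; exact star_one ℝ
  · rw [if_neg h, if_neg (fun h' => h (F.G.adj_symm h'))]; exact star_zero ℝ

lemma dot_self_eq (F : RootedGraph) (y : F.V → ℝ) : y ⬝ᵥ y = ∑ v, y v ^ 2 := by
  simp [dotProduct, sq]

lemma lam1_spec (F : RootedGraph) :
    (∃ x : F.V → ℝ, (∑ v, x v ^ 2 = 1) ∧ quad F x = F.lam1) ∧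
    (∀ y : F.V → ℝ, F.lam1 * ∑ v, y v ^ 2 ≤ quad F y) := by
  classical
  have hne : Nonempty F.V := ⟨F.root⟩
  have hA : F.adjMat.IsHermitian := adjMat_isHermitian F
  have hT : F.adjMatᵀ = F.adjMat := by
    rw [← Matrix.conjTranspose_eq_transpose_of_trivial]; exact hA
  obtain ⟨i0, -, hmin⟩ := Finset.exists_min_image Finset.univ hA.eigenvalues
    ⟨Classical.arbitrary F.V, Finset.mem_univ _⟩
  have hIB1 : ∀ (w : F.V → ℝ) (i : F.V),
      inner (𝕜 := ℝ) ((WithLp.equiv 2 (F.V → ℝ)).symm w) (hA.eigenvectorBasis i)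
        = w ⬝ᵥ ⇑(hA.eigenvectorBasis i) := by
    intro w i
    rw [PiLp.inner_apply]
    simp [dotProduct, RCLike.inner_apply, mul_comm]
  have hIB2 : ∀ (w : F.V → ℝ) (i : F.V),
      inner (𝕜 := ℝ) (hA.eigenvectorBasis i) ((WithLp.equiv 2 (F.V → ℝ)).symm w)
        = ⇑(hA.eigenvectorBasis i) ⬝ᵥ w := by
    intro w i
    rw [PiLp.inner_apply]
    simp [dotProduct, RCLike.inner_apply, mul_comm]
  have hIB3 : ∀ (w z : F.V → ℝ),
      inner (𝕜 := ℝ) ((WithLp.equiv 2 (F.V → ℝ)).symm w) ((WithLp.equiv 2 (F.V → ℝ)).symm z)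
        = w ⬝ᵥ z := by
    intro w z
    rw [PiLp.inner_apply]
    simp [dotProduct, RCLike.inner_apply, mul_comm]
  -- b i as plain functions
  have hbi : ∀ (y : F.V → ℝ) (i : F.V),
      ⇑(hA.eigenvectorBasis i) ⬝ᵥ (F.adjMat *ᵥ y)
        = hA.eigenvalues i * (⇑(hA.eigenvectorBasis i) ⬝ᵥ y) := by
    intro y i
    rw [Matrix.dotProduct_mulVec, ← Matrix.mulVec_transpose, hT,
      hA.mulVec_eigenvectorBasis, smul_dotProduct, smul_eq_mul]
  have hyy : ∀ y : F.V → ℝ, y ⬝ᵥ y = ∑ i, (⇑(hA.eigenvectorBasis i) ⬝ᵥ y) ^ 2 := by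
    intro y
    have hP := OrthonormalBasis.sum_inner_mul_inner hA.eigenvectorBasis
      ((WithLp.equiv 2 (F.V → ℝ)).symm y) ((WithLp.equiv 2 (F.V → ℝ)).symm y)
    rw [hIB3] at hP
    rw [← hP]
    refine Finset.sum_congr rfl fun i _ => ?_
    rw [hIB1, hIB2, dotProduct_comm, sq]
  have hAy : ∀ y : F.V → ℝ, y ⬝ᵥ (F.adjMat *ᵥ y)
      = ∑ i, hA.eigenvalues i * (⇑(hA.eigenvectorBasis i) ⬝ᵥ y) ^ 2 := by
    intro y
    have hP := OrthonormalBasis.sum_inner_mul_inner hA.eigenvectorBasis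
      ((WithLp.equiv 2 (F.V → ℝ)).symm y) ((WithLp.equiv 2 (F.V → ℝ)).symm (F.adjMat *ᵥ y))
    rw [hIB3] at hP
    rw [← hP]
    refine Finset.sum_congr rfl fun i _ => ?_
    rw [hIB1, hIB2, hbi, dotProduct_comm, sq]
    ring
  have rayleigh : ∀ y : F.V → ℝ, hA.eigenvalues i0 * ∑ v, y v ^ 2 ≤ quad F y := by
    intro y
    rw [quad_eq_dot, hAy y, ← dot_self_eq, hyy y, Finset.mul_sum]
    refine Finset.sum_le_sum fun i _ => ?_
    have := hmin i (Finset.mem_univ i)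
    nlinarith [sq_nonneg (⇑(hA.eigenvectorBasis i) ⬝ᵥ y)]
  have hx0 : (⇑(hA.eigenvectorBasis i0) : F.V → ℝ) ≠ 0 := by
    have h := hA.eigenvectorBasis.orthonormal.ne_zero i0
    intro hc
    apply h
    ext v
    exact congrFun hc v
  have hxsum : ∑ v, (⇑(hA.eigenvectorBasis i0) : F.V → ℝ) v ^ 2 = 1 := by
    rw [← dot_self_eq]
    have h2 : inner (𝕜 := ℝ) (hA.eigenvectorBasis i0) (hA.eigenvectorBasis i0) = (1:ℝ) := by
      rw [real_inner_self_eq_norm_sq, hA.eigenvectorBasis.orthonormal.1 i0]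
      norm_num
    have h3 := hIB2 (⇑(hA.eigenvectorBasis i0)) i0
    rw [← h3]
    rw [← h2]
    rfl
  have hμS : hA.eigenvalues i0 ∈ {t : ℝ | ∃ x : F.V → ℝ, x ≠ 0 ∧ F.adjMat.mulVec x = t • x} :=
    ⟨_, hx0, hA.mulVec_eigenvectorBasis i0⟩
  have hlb : ∀ t ∈ {t : ℝ | ∃ x : F.V → ℝ, x ≠ 0 ∧ F.adjMat.mulVec x = t • x},
      hA.eigenvalues i0 ≤ t := by
    rintro t ⟨x, hx, hxe⟩
    have hpos : 0 < ∑ v, x v ^ 2 := by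
      obtain ⟨v, hv⟩ := Function.ne_iff.mp hx
      exact Finset.sum_pos' (fun u _ => sq_nonneg _)
        ⟨v, Finset.mem_univ v, by
          have hv' : x v ≠ 0 := hv
          positivity⟩
    have hq : quad F x = t * ∑ v, x v ^ 2 := by
      rw [quad_eq_dot, hxe, dotProduct_smul, smul_eq_mul, dot_self_eq]
    have h := rayleigh x
    rw [hq] at h
    exact le_of_mul_le_mul_right h hpos
  have hlam : F.lam1 = hA.eigenvalues i0 := by
    unfold RootedGraph.lam1
    exact le_antisymm (csInf_le ⟨_, hlb⟩ hμS) (le_csInf ⟨_, hμS⟩ hlb)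
  constructor
  · refine ⟨⇑(hA.eigenvectorBasis i0), hxsum, ?_⟩
    rw [hlam, quad_eq_dot, hA.mulVec_eigenvectorBasis i0, dotProduct_smul,
      smul_eq_mul, dot_self_eq, hxsum, mul_one]
  · intro y
    rw [hlam]
    exact rayleigh y

lemma lam1_lower (a : List ℕ) (F : RootedGraph) (x : (F.rowing a).V → ℝ)
    (hx1 : ∑ v, x v ^ 2 = 1) :
    -((Fintype.card F.V : ℝ) + 3) ≤ quad (F.rowing a) x := by
  have h1 := quad_rowing_ge a F x
  have h2 := quad_ge_base F (fun u => x (inclRow a F u))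
  beta_reduce at h2
  have hs1 : ∑ u : F.V, x (inclRow a F u) ^ 2 ≤ ∑ v, x v ^ 2 := by
    have e : ∑ v ∈ Finset.univ.image (inclRow a F), x v ^ 2
        = ∑ u : F.V, x (inclRow a F u) ^ 2 :=
      Finset.sum_image (fun u _ v _ h => inclRow_injective a F h)
    rw [← e]
    exact Finset.sum_le_sum_of_subset_of_nonneg (Finset.subset_univ _)
      (fun v _ _ => sq_nonneg _)
  have hs0 : (0:ℝ) ≤ ∑ u : F.V, x (inclRow a F u) ^ 2 :=
    Finset.sum_nonneg fun u _ => sq_nonneg _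
  have hr : x (inclRow a F F.root) ^ 2 ≤ ∑ u : F.V, x (inclRow a F u) ^ 2 :=
    Finset.single_le_sum (f := fun u : F.V => x (inclRow a F u) ^ 2)
      (fun u _ => sq_nonneg _) (Finset.mem_univ F.root)
  have hcard : (0:ℝ) ≤ (Fintype.card F.V : ℝ) := Nat.cast_nonneg _
  rw [hx1] at h1 hs1
  nlinarith [mul_le_mul_of_nonneg_left hs1 hcard]

theorem lam1_rowing_insert_zero' (ε : ℝ) (hε : 0 < ε) (F : RootedGraph) :
    ∃ m : ℕ, 0 < m ∧ ∀ a : List ℕ, m ≤ a.length →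
      ∃ k : ℕ, 1 ≤ k ∧ k ≤ m ∧
        (F.rowing (a.take (k - 1) ++ 0 :: a.drop (k - 1))).lam1 <
          (F.rowing a).lam1 + ε := by
  classical
  set C : ℝ := (Fintype.card F.V : ℝ) + 3 with hC
  have hC0 : (0:ℝ) ≤ C := by positivity
  set m : ℕ := ⌈(C + 2) / ε⌉₊ + 1 with hm
  have hm0 : 0 < m := Nat.succ_pos _
  have hmpos : (0:ℝ) < (m:ℝ) := by exact_mod_cast hm0
  have hεm : C + 2 < (m:ℝ) * ε := by
    have h1 : (C + 2) / ε ≤ (⌈(C + 2) / ε⌉₊ : ℝ) := Nat.le_ceil _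
    have h2 : ((⌈(C + 2) / ε⌉₊ : ℝ)) < (m:ℝ) := by
      rw [hm]; push_cast; linarith
    exact (div_lt_iff₀ hε).mp (lt_of_le_of_lt h1 h2)
  refine ⟨m, hm0, ?_⟩
  intro a ha
  obtain ⟨⟨x, hx1, hxq⟩, -⟩ := lam1_spec (F.rowing a)
  -- pigeonhole
  have hsum_le : ∑ j ∈ Finset.range m, x (rootAt a F j) ^ 2 ≤ 1 := by
    have e : ∑ v ∈ (Finset.range m).image (rootAt a F), x v ^ 2
        = ∑ j ∈ Finset.range m, x (rootAt a F j) ^ 2 := by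
      refine Finset.sum_image ?_
      intro i hi j hj h
      exact rootAt_injOn a F i j
        (le_trans (Nat.le_of_lt_succ (Nat.lt_succ_of_lt (Finset.mem_range.mp hi))) ha)
        (le_trans (Nat.le_of_lt_succ (Nat.lt_succ_of_lt (Finset.mem_range.mp hj))) ha) h
    rw [← e, ← hx1]
    exact Finset.sum_le_sum_of_subset_of_nonneg (Finset.subset_univ _)
      (fun v _ _ => sq_nonneg _)
  have hpig : ∃ j, j < m ∧ x (rootAt a F j) ^ 2 ≤ 1 / (m:ℝ) := by
    by_contra hcon
    push_neg at hcon
    have hlt : ∑ j ∈ Finset.range m, (1:ℝ) / (m:ℝ)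
        < ∑ j ∈ Finset.range m, x (rootAt a F j) ^ 2 := by
      refine Finset.sum_lt_sum_of_nonempty ⟨0, Finset.mem_range.mpr hm0⟩ ?_
      intro j hj
      exact hcon j (Finset.mem_range.mp hj)
    rw [Finset.sum_const, Finset.card_range, nsmul_eq_mul, mul_one_div,
      div_self (ne_of_gt hmpos)] at hlt
    linarith
  obtain ⟨j, hjm, hjt⟩ := hpig
  have hja : j ≤ a.length := le_trans (le_of_lt (lt_of_lt_of_le hjm ha)) (le_refl _)
  obtain ⟨y, hysum, hyq⟩ := main_ineq j a F (by omega) x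
  refine ⟨j + 1, by omega, by omega, ?_⟩
  simp only [Nat.add_sub_cancel]
  set t := x (rootAt a F j) ^ 2 with hte
  have ht0 : 0 ≤ t := sq_nonneg _
  have hlow : -C ≤ (F.rowing a).lam1 := by
    rw [← hxq]; exact lam1_lower a F x hx1
  obtain ⟨-, hray'⟩ := lam1_spec (F.rowing (a.take j ++ 0 :: a.drop j))
  have h1 := hray' y
  rw [hysum, hx1, hyq, hxq] at h1
  -- h1 : lam1 G' * (1 + t) ≤ lam1 G + 2 * t
  have hinv : (C + 2) * (1 / (m:ℝ)) < ε := by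
    rw [mul_one_div, div_lt_iff₀ hmpos]
    linarith [hεm]
  have key : (F.rowing a).lam1 + 2 * t < ((F.rowing a).lam1 + ε) * (1 + t) := by
    nlinarith [mul_le_mul_of_nonneg_right hlow ht0, mul_nonneg hε.le ht0,
      mul_le_mul_of_nonneg_left hjt (by linarith : (0:ℝ) ≤ C + 2), hinv]
  have hfin := lt_of_le_of_lt h1 key
  have hpos : (0:ℝ) < 1 + t := by linarith
  exact lt_of_mul_lt_mul_right hfin (le_of_lt hpos)

end RowAux

/-- For every `ε > 0` and every rooted graph `F`, there exists a positive integer `m`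
such that for every string `a = a₁…aₙ ∈ ℕⁿ` with `n ≥ m` there exists `k ∈ {1, …, m}`
with `λ₁(F, a₁…a_{k-1}0a_k…aₙ) < λ₁(F, a) + ε`. -/
theorem lam1_rowing_insert_zero (ε : ℝ) (hε : 0 < ε) (F : RootedGraph) :
    ∃ m : ℕ, 0 < m ∧ ∀ a : List ℕ, m ≤ a.length →
      ∃ k : ℕ, 1 ≤ k ∧ k ≤ m ∧
        (F.rowing (a.take (k - 1) ++ 0 :: a.drop (k - 1))).lam1 <
          (F.rowing a).lam1 + ε := by
  exact RowAux.lam1_rowing_insert_zero' ε hε F
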